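/- Fix y ∈ ℝ, τ ∈ (0,1) and ν > 0, and define Ψ₀(m) = ∫ [ (1/2)|y − η| + (τ − 1/2)(y − η) ] φ(η; m, ν²) dη. Then for every m ∈ ℝ, the derivative of Ψ₀ with respect to m equals 1 − τ − Φ(y; m, ν²). -/

import Mathlib

open MeasureTheory Real Filter

/-- Gaussian density with mean `m` and variance `ν ^ 2`, evaluated at `x`:
`φ(x; m, ν²) = (2πν²)^{-1/2} exp(−(x−m)²/(2ν²))`. -/
noncomputable def gpdf (m ν x : ℝ) : ℝ :=
  (Real.sqrt (2 * Real.pi * ν ^ 2))⁻¹ * Real.exp (-((x - m) ^ 2) / (2 * ν ^ 2))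

/-- Gaussian cumulative distribution function with mean `m` and variance `ν ^ 2`:
`Φ(c; m, ν²) = ∫_{−∞}^{c} φ(η; m, ν²) dη`. -/
noncomputable def gcdf (m ν c : ℝ) : ℝ := ∫ x in Set.Iio c, gpdf m ν x

namespace QuantileAux

/-- The pinball loss. -/
noncomputable def pb (τ t : ℝ) : ℝ := 1 / 2 * |t| + (τ - 1 / 2) * t

lemma continuous_pb (τ : ℝ) : Continuous (pb τ) := by
  unfold pb; fun_prop

lemma pb_lipschitz {τ : ℝ} (hτ : τ ∈ Set.Ioo (0:ℝ) 1) : LipschitzWith 1 (pb τ) := by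
  refine LipschitzWith.of_dist_le_mul fun a b => ?_
  simp only [Real.dist_eq, pb, NNReal.coe_one, one_mul]
  have key : 1 / 2 * |a| + (τ - 1 / 2) * a - (1 / 2 * |b| + (τ - 1 / 2) * b)
      = 1 / 2 * (|a| - |b|) + (τ - 1 / 2) * (a - b) := by ring
  rw [key]
  have h1 : |(|a| - |b|)| ≤ |a - b| := abs_abs_sub_abs_le_abs_sub a b
  have h2 : |τ - 1 / 2| ≤ 1 / 2 := by
    rw [abs_le]; constructor <;> [linarith [hτ.1]; linarith [hτ.2]]
  calc |1 / 2 * (|a| - |b|) + (τ - 1 / 2) * (a - b)|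
      ≤ |1 / 2 * (|a| - |b|)| + |(τ - 1 / 2) * (a - b)| := abs_add_le _ _
    _ = 1 / 2 * |(|a| - |b|)| + |τ - 1 / 2| * |a - b| := by
        rw [abs_mul, abs_mul]; norm_num
    _ ≤ 1 / 2 * |a - b| + 1 / 2 * |a - b| := by
        have := abs_nonneg (a - b)
        gcongr
    _ = |a - b| := by ring

lemma pb_abs_le {τ : ℝ} (hτ : τ ∈ Set.Ioo (0:ℝ) 1) (t : ℝ) : |pb τ t| ≤ |t| := by
  have h := (pb_lipschitz hτ).dist_le_mul t 0
  simpa [Real.dist_eq, pb] using h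

lemma pb_deriv_pos {τ t : ℝ} (ht : 0 < t) : HasDerivAt (pb τ) τ t := by
  have h : HasDerivAt (fun s : ℝ => τ * s) τ t := by
    simpa using (hasDerivAt_id t).const_mul τ
  refine h.congr_of_eventuallyEq ?_
  filter_upwards [Ioi_mem_nhds ht] with s hs
  have : (0:ℝ) < s := hs
  simp only [pb, abs_of_pos this]; ring

lemma pb_deriv_neg {τ t : ℝ} (ht : t < 0) : HasDerivAt (pb τ) (τ - 1) t := by
  have h : HasDerivAt (fun s : ℝ => (τ - 1) * s) (τ - 1) t := by
    simpa using (hasDerivAt_id t).const_mul (τ - 1)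
  refine h.congr_of_eventuallyEq ?_
  filter_upwards [Iio_mem_nhds ht] with s hs
  have : s < (0:ℝ) := hs
  simp only [pb, abs_of_neg this]; ring

lemma gpdf_eq_pdfReal (m ν : ℝ) :
    gpdf m ν = ProbabilityTheory.gaussianPDFReal m ⟨ν ^ 2, sq_nonneg ν⟩ := rfl

lemma gpdf_nonneg (m ν x : ℝ) : 0 ≤ gpdf m ν x := by
  unfold gpdf; positivity

lemma continuous_gpdf (m ν : ℝ) : Continuous (gpdf m ν) := by
  unfold gpdf; fun_prop

lemma integrable_gpdf (m ν : ℝ) : Integrable (gpdf m ν) := by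
  rw [gpdf_eq_pdfReal]
  exact ProbabilityTheory.integrable_gaussianPDFReal m _

lemma integral_gpdf (m : ℝ) {ν : ℝ} (hν : 0 < ν) : ∫ x, gpdf m ν x = 1 := by
  rw [gpdf_eq_pdfReal]
  refine ProbabilityTheory.integral_gaussianPDFReal_eq_one m ?_
  intro h
  have : ν ^ 2 = 0 := congrArg NNReal.toReal h
  nlinarith

lemma gpdf_translate (m ν x : ℝ) : gpdf m ν x = gpdf 0 ν (x - m) := by
  simp [gpdf]

lemma integrable_abs_mul_gpdf {ν : ℝ} (hν : 0 < ν) :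
    Integrable (fun x => |x| * gpdf 0 ν x) := by
  have hb : 0 < (2 * ν ^ 2)⁻¹ := by positivity
  have h1 : Integrable (fun x : ℝ => |x * Real.exp (-(2 * ν ^ 2)⁻¹ * x ^ 2)|) :=
    (integrable_mul_exp_neg_mul_sq hb).abs
  have h2 := h1.const_mul (Real.sqrt (2 * Real.pi * ν ^ 2))⁻¹
  refine h2.congr (ae_of_all _ fun x => ?_)
  have hexp : -(2 * ν ^ 2)⁻¹ * x ^ 2 = -((x - 0) ^ 2) / (2 * ν ^ 2) := by
    field_simp
    ring
  simp only [abs_mul, abs_of_nonneg (Real.exp_pos _).le, hexp]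
  unfold gpdf
  ring

end QuantileAux

open QuantileAux in
theorem quantile_Psi1 (y τ ν : ℝ) (hτ : τ ∈ Set.Ioo (0 : ℝ) 1) (hν : 0 < ν) (m : ℝ) :
    HasDerivAt (fun m' => ∫ η, ((1 / 2) * |y - η| + (τ - 1 / 2) * (y - η)) * gpdf m' ν η)
      (1 - τ - gcdf m ν y) m := by
  have hc : ∀ m' : ℝ,
      (∫ η, ((1 / 2) * |y - η| + (τ - 1 / 2) * (y - η)) * gpdf m' ν η)
        = ∫ u, pb τ (y - (u + m')) * gpdf 0 ν u := by
    intro m'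
    rw [← integral_add_right_eq_self
      (fun η => ((1 / 2) * |y - η| + (τ - 1 / 2) * (y - η)) * gpdf m' ν η) m']
    refine integral_congr_ae (ae_of_all _ fun u => ?_)
    simp only
    rw [gpdf_translate m' ν (u + m')]
    simp only [add_sub_cancel_right]
    rfl
  have hfun : (fun m' => ∫ η, ((1 / 2) * |y - η| + (τ - 1 / 2) * (y - η)) * gpdf m' ν η)
      = fun m' => ∫ u, pb τ (y - (u + m')) * gpdf 0 ν u := funext hc
  rw [hfun]
  set c : ℝ := y - m with hcdef
  set φ : ℝ → ℝ := gpdf 0 ν with hφ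
  set F' : ℝ → ℝ := fun u => (if u < c then -τ else 1 - τ) * φ u with hF'
  have hφcont : Continuous φ := continuous_gpdf 0 ν
  have hφnn : ∀ u, 0 ≤ φ u := gpdf_nonneg 0 ν
  have hF_meas : ∀ᶠ m' in nhds m,
      AEStronglyMeasurable (fun u => pb τ (y - (u + m')) * φ u) volume := by
    filter_upwards with m'
    exact (((continuous_pb τ).comp (by fun_prop)).mul hφcont).aestronglyMeasurable
  have hbound_int : Integrable (fun u => (|y - m| + |u|) * φ u) := by
    have h := ((integrable_gpdf 0 ν).const_mul |y - m|).add (integrable_abs_mul_gpdf hν)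
    refine h.congr (ae_of_all _ fun u => ?_)
    simp only [Pi.add_apply, ← hφ]
    ring
  have hF_int : Integrable (fun u => pb τ (y - (u + m)) * φ u) := by
    refine hbound_int.mono'
      ((((continuous_pb τ).comp (by fun_prop)).mul hφcont).aestronglyMeasurable)
      (ae_of_all _ fun u => ?_)
    rw [Real.norm_eq_abs, abs_mul, abs_of_nonneg (hφnn u)]
    refine mul_le_mul_of_nonneg_right ?_ (hφnn u)
    calc |pb τ (y - (u + m))| ≤ |y - (u + m)| := pb_abs_le hτ _
      _ = |(y - m) + (-u)| := by ring_nf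
      _ ≤ |y - m| + |(-u)| := abs_add_le _ _
      _ = |y - m| + |u| := by rw [abs_neg]
  have hF'_meas : AEStronglyMeasurable F' volume := by
    refine (Measurable.mul ?_ hφcont.measurable).aestronglyMeasurable
    exact Measurable.ite measurableSet_Iio measurable_const measurable_const
  have h_lip : ∀ᵐ u : ℝ, LipschitzOnWith (Real.nnabs (φ u))
      (fun m' => pb τ (y - (u + m')) * φ u) (Metric.ball m 1) := by
    filter_upwards with u
    refine LipschitzWith.lipschitzOnWith ?_
    refine LipschitzWith.of_dist_le_mul fun a b => ?_
    rw [Real.dist_eq, Real.dist_eq, Real.coe_nnabs]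
    have h1 : |pb τ (y - (u + a)) - pb τ (y - (u + b))| ≤ |a - b| := by
      have h2 := (pb_lipschitz hτ).dist_le_mul (y - (u + a)) (y - (u + b))
      rw [Real.dist_eq, Real.dist_eq, NNReal.coe_one, one_mul] at h2
      calc |pb τ (y - (u + a)) - pb τ (y - (u + b))|
          ≤ |(y - (u + a)) - (y - (u + b))| := h2
        _ = |a - b| := by
            rw [show (y - (u + a)) - (y - (u + b)) = b - a by ring, abs_sub_comm]
    calc |pb τ (y - (u + a)) * φ u - pb τ (y - (u + b)) * φ u|
        = |pb τ (y - (u + a)) - pb τ (y - (u + b))| * |φ u| := by rw [← sub_mul, abs_mul]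
      _ ≤ |a - b| * |φ u| := by gcongr
      _ = |φ u| * |a - b| := mul_comm _ _
  have hae : ∀ᵐ u : ℝ, u ≠ c := by
    rw [ae_iff]
    simp only [ne_eq, not_not, Set.setOf_eq_eq_singleton]
    exact Real.volume_singleton
  have h_diff : ∀ᵐ u : ℝ, HasDerivAt (fun m' => pb τ (y - (u + m')) * φ u) (F' u) m := by
    filter_upwards [hae] with u hu
    have hinner : HasDerivAt (fun m' : ℝ => y - (u + m')) (-1) m := by
      simpa using ((hasDerivAt_id m).const_add u).const_sub y
    rcases lt_or_gt_of_ne hu with h | h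
    · have h' : u < y - m := by rw [hcdef] at h; exact h
      have ht : 0 < y - (u + m) := by linarith
      have houter := ((pb_deriv_pos (τ := τ) ht).comp m hinner).mul_const (φ u)
      refine houter.congr_deriv ?_
      simp only [hF', if_pos h]
      ring
    · have h' : y - m < u := by rw [hcdef] at h; exact h
      have ht : y - (u + m) < 0 := by linarith
      have houter := ((pb_deriv_neg (τ := τ) ht).comp m hinner).mul_const (φ u)
      refine houter.congr_deriv ?_
      simp only [hF', if_neg (not_lt.2 (le_of_lt h))]
      ring
  obtain ⟨hF'_int, hder⟩ := hasDerivAt_integral_of_dominated_loc_of_lip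
    (F := fun m' u => pb τ (y - (u + m')) * φ u) (F' := F') (bound := φ)
    (Metric.ball_mem_nhds m one_pos) hF_meas hF_int hF'_meas h_lip (integrable_gpdf 0 ν) h_diff
  refine hder.congr_deriv ?_
  have hcompl : (Set.Iio c)ᶜ = Set.Ici c := by
    ext u; simp [not_lt]
  have hsplit : (∫ u in Set.Iio c, F' u) + (∫ u in Set.Ici c, F' u) = ∫ u, F' u := by
    rw [← hcompl]
    exact integral_add_compl measurableSet_Iio hF'_int
  have hIio : ∫ u in Set.Iio c, F' u = -τ * (∫ u in Set.Iio c, φ u) := by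
    rw [show -τ * (∫ u in Set.Iio c, φ u) = ∫ u in Set.Iio c, -τ * φ u from
      (integral_const_mul _ _).symm]
    refine setIntegral_congr_fun measurableSet_Iio fun u hu => ?_
    simp only [hF', if_pos (Set.mem_Iio.mp hu)]
  have hIci : ∫ u in Set.Ici c, F' u = (1 - τ) * (∫ u in Set.Ici c, φ u) := by
    rw [show (1 - τ) * (∫ u in Set.Ici c, φ u) = ∫ u in Set.Ici c, (1 - τ) * φ u from
      (integral_const_mul _ _).symm]
    refine setIntegral_congr_fun measurableSet_Ici fun u hu => ?_
    simp only [hF', if_neg (not_lt.mpr (Set.mem_Ici.mp hu))]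
  have htotal : (∫ u in Set.Iio c, φ u) + (∫ u in Set.Ici c, φ u) = 1 := by
    have h := integral_add_compl (measurableSet_Iio (a := c)) (integrable_gpdf 0 ν)
    rw [hcompl] at h
    rw [hφ, h, integral_gpdf 0 hν]
  have hgcdf : gcdf m ν y = ∫ u in Set.Iio c, φ u := by
    rw [gcdf, ← integral_indicator measurableSet_Iio, ← integral_indicator measurableSet_Iio]
    rw [show (Set.Iio y).indicator (fun x => gpdf m ν x)
        = fun x => (Set.Iio c).indicator φ (x - m) from ?_]
    · exact integral_sub_right_eq_self _ m
    · funext x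
      by_cases hx : x < y
      · rw [Set.indicator_of_mem (Set.mem_Iio.mpr hx),
          Set.indicator_of_mem (Set.mem_Iio.mpr (by rw [hcdef]; linarith))]
        rw [hφ]
        exact gpdf_translate m ν x
      · rw [Set.indicator_of_notMem (by simpa using hx),
          Set.indicator_of_notMem (by rw [Set.mem_Iio, hcdef]; intro hlt; exact hx (by linarith))]
  rw [← hsplit, hIio, hIci, hgcdf]
  have hB : (∫ u in Set.Ici c, φ u) = 1 - (∫ u in Set.Iio c, φ u) := by linarith
  rw [hB]
  ring
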